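/- Let e₁, e₂ be symmetric trace-free n×n real matrices. The following are equivalent: (i) there exist a ∈ ℝⁿ \ {0} and a unit vector n₀ with e₁ - e₂ = (1/2)(a ⊗ n₀ + n₀ ⊗ a); (ii) there exist matrices M₁, M₂ with symmetric parts e₁, e₂ respectively and rank(M₁ - M₂) = 1; (iii) rank(e₁ - e₂) ≤ 2 and e₁ ≠ e₂. -/

import Mathlib

open Matrix


lemma myrank_ne_zero {m k : ℕ} (A : Matrix (Fin m) (Fin k) ℝ) (h : A ≠ 0) : A.rank ≠ 0 := by
  rw [Matrix.rank]
  intro h0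
  have hb : LinearMap.range A.mulVecLin = ⊥ := Submodule.finrank_eq_zero.mp h0
  rw [LinearMap.range_eq_bot] at hb
  apply h
  ext i j
  have := congrFun (LinearMap.congr_fun hb (Pi.single j 1)) i
  simpa [Matrix.mulVecLin_apply, Matrix.mulVec_single] using this

lemma myrank_add_le {m k : ℕ} (A B : Matrix (Fin m) (Fin k) ℝ) :
    (A + B).rank ≤ A.rank + B.rank := by
  rw [Matrix.rank, Matrix.rank, Matrix.rank, Matrix.mulVecLin_add]
  refine le_trans (Submodule.finrank_mono ?_) (Submodule.finrank_add_le_finrank_add_finrank _ _)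
  intro x hx
  obtain ⟨y, rfl⟩ := hx
  exact Submodule.add_mem_sup (LinearMap.mem_range_self _ y) (LinearMap.mem_range_self _ y)

lemma myrank_smul {m k : ℕ} (A : Matrix (Fin m) (Fin k) ℝ) {c : ℝ} (hc : c ≠ 0) :
    (c • A).rank = A.rank := by
  rw [Matrix.smul_eq_diagonal_mul]
  refine Matrix.rank_mul_eq_right_of_isUnit_det _ _ ?_
  rw [Matrix.det_diagonal, Finset.prod_const]
  exact isUnit_iff_ne_zero.mpr (pow_ne_zero _ hc)

lemma myrank_vecMulVec {m : ℕ} (a b : Fin m → ℝ) (ha : a ≠ 0) (hb : b ≠ 0) :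
    (vecMulVec a b).rank = 1 := by
  refine le_antisymm ?_ ?_
  · rw [Matrix.vecMulVec_eq (Fin 1)]
    exact le_trans (Matrix.rank_mul_le_left _ _)
      (le_trans (Matrix.rank_le_card_width _) (by simp))
  · rw [Nat.one_le_iff_ne_zero]
    apply myrank_ne_zero
    obtain ⟨i, hi⟩ := Function.ne_iff.mp ha
    obtain ⟨j, hj⟩ := Function.ne_iff.mp hb
    intro h0
    have := congrFun (congrFun h0 i) j
    rw [Matrix.vecMulVec_apply] at this
    simp at this
    exact this.elim hi hj


/-- if two columns are linearly independent, rank ≥ 2 -/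
lemma two_le_rank {m : ℕ} (A : Matrix (Fin m) (Fin m) ℝ) (i j : Fin m)
    (h : LinearIndependent ℝ ![A.mulVecLin (Pi.single i 1), A.mulVecLin (Pi.single j 1)]) :
    2 ≤ A.rank := by
  rw [Matrix.rank]
  have h1 : Submodule.span ℝ (Set.range ![A.mulVecLin (Pi.single i 1),
      A.mulVecLin (Pi.single j 1)]) ≤ LinearMap.range A.mulVecLin := by
    rw [Submodule.span_le]
    rintro x ⟨k, rfl⟩
    fin_cases k <;> exact LinearMap.mem_range_self _ _
  have h2 := finrank_span_eq_card h
  calc (2 : ℕ) = Fintype.card (Fin 2) := by simp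
    _ = _ := h2.symm
    _ ≤ _ := Submodule.finrank_mono h1
section
variable {n : ℕ} (e₁ e₂ : Matrix (Fin n) (Fin n) ℝ)

lemma imp12 (h₁s : e₁.IsSymm) (h₂s : e₂.IsSymm)
    (h : ∃ (a n₀ : Fin n → ℝ), a ≠ 0 ∧ n₀ ⬝ᵥ n₀ = 1 ∧
        e₁ - e₂ = (1 / 2 : ℝ) • (vecMulVec a n₀ + vecMulVec n₀ a)) :
    ∃ M₁ M₂ : Matrix (Fin n) (Fin n) ℝ,
      (1 / 2 : ℝ) • (M₁ + M₁ᵀ) = e₁ ∧ (1 / 2 : ℝ) • (M₂ + M₂ᵀ) = e₂ ∧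
      (M₁ - M₂).rank = 1 := by
  obtain ⟨a, n₀, ha, hn, he⟩ := h
  have hn0 : n₀ ≠ 0 := by
    intro h0; rw [h0] at hn; simp at hn
  refine ⟨e₂ + vecMulVec a n₀, e₂, ?_, ?_, ?_⟩
  · have ht : (vecMulVec a n₀)ᵀ = vecMulVec n₀ a := by
      ext i j; simp [Matrix.transpose_apply, Matrix.vecMulVec_apply, mul_comm]
    rw [Matrix.transpose_add, ht, h₂s.eq]
    have : e₂ + vecMulVec a n₀ + (e₂ + vecMulVec n₀ a)
        = (e₂ + e₂) + (vecMulVec a n₀ + vecMulVec n₀ a) := by abel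
    rw [this, smul_add, ← he]
    have : (1/2 : ℝ) • (e₂ + e₂) = e₂ := by
      rw [← two_smul ℝ e₂, smul_smul]; norm_num
    rw [this]; abel
  · rw [h₂s.eq, ← two_smul ℝ e₂, smul_smul]; norm_num
  · have : e₂ + vecMulVec a n₀ - e₂ = vecMulVec a n₀ := by abel
    rw [this]
    exact myrank_vecMulVec a n₀ ha hn0
end
section
variable {n : ℕ} (e₁ e₂ : Matrix (Fin n) (Fin n) ℝ)

lemma imp23
    (h : ∃ M₁ M₂ : Matrix (Fin n) (Fin n) ℝ,
      (1 / 2 : ℝ) • (M₁ + M₁ᵀ) = e₁ ∧ (1 / 2 : ℝ) • (M₂ + M₂ᵀ) = e₂ ∧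
      (M₁ - M₂).rank = 1) :
    (e₁ - e₂).rank ≤ 2 ∧ e₁ ≠ e₂ := by
  obtain ⟨M₁, M₂, h1, h2, hr⟩ := h
  set N := M₁ - M₂ with hN
  have hdiff : e₁ - e₂ = (1 / 2 : ℝ) • (N + Nᵀ) := by
    rw [← h1, ← h2, hN]
    rw [Matrix.transpose_sub]
    rw [← smul_sub]
    congr 1
    abel
  constructor
  · rw [hdiff, myrank_smul _ (by norm_num : (1/2:ℝ) ≠ 0)]
    calc (N + Nᵀ).rank ≤ N.rank + Nᵀ.rank := myrank_add_le _ _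
      _ = 1 + 1 := by rw [hr, Matrix.rank_transpose, hr]
      _ = 2 := rfl
  · intro heq
    have h0 : N + Nᵀ = 0 := by
      have : (1/2 : ℝ) • (N + Nᵀ) = 0 := by rw [← hdiff, heq, sub_self]
      have := smul_eq_zero.mp this
      rcases this with h | h
      · norm_num at h
      · exact h
    have hskew : ∀ p q, N q p = - N p q := by
      intro p q
      have := congrFun (congrFun h0 q) p
      simp [Matrix.transpose_apply] at this
      linarith
    have hNne : N ≠ 0 := by
      intro hz; rw [hz, Matrix.rank_zero] at hr; exact absurd hr (by norm_num)
    have hdiag : ∀ p, N p p = 0 := by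
      intro p; have := hskew p p; linarith
    obtain ⟨i, j, hij⟩ : ∃ i j, N i j ≠ 0 := by
      by_contra hc
      push_neg at hc
      exact hNne (by ext i j; simpa using hc i j)
    have hne : i ≠ j := by
      intro h'; rw [h'] at hij; exact hij (hdiag j)
    have hli : LinearIndependent ℝ ![N.mulVecLin (Pi.single i 1), N.mulVecLin (Pi.single j 1)] := by
      rw [LinearIndependent.pair_iff]
      intro s t hst
      have hi' := congrFun hst i
      have hj' := congrFun hst j
      simp [Matrix.mulVecLin_apply, Matrix.mulVec_single] at hi' hj'
      rw [hdiag i] at hi'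
      rw [hdiag j] at hj'
      have hji : N j i = - N i j := hskew i j
      constructor
      · have : s * N j i = 0 := by linarith
        rcases mul_eq_zero.mp this with h | h
        · exact h
        · rw [hji] at h; simp at h; exact absurd h hij
      · have : t * N i j = 0 := by linarith
        rcases mul_eq_zero.mp this with h | h
        · exact h
        · exact absurd h hij
    have := two_le_rank N i j hli
    rw [hr] at this
    norm_num at this
end
section
variable {n : ℕ} (e₁ e₂ : Matrix (Fin n) (Fin n) ℝ)

lemma imp31 (h₁s : e₁.IsSymm) (h₂s : e₂.IsSymm)
    (h₁t : e₁.trace = 0) (h₂t : e₂.trace = 0)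
    (h : (e₁ - e₂).rank ≤ 2 ∧ e₁ ≠ e₂) :
    ∃ (a n₀ : Fin n → ℝ), a ≠ 0 ∧ n₀ ⬝ᵥ n₀ = 1 ∧
        e₁ - e₂ = (1 / 2 : ℝ) • (vecMulVec a n₀ + vecMulVec n₀ a) := by
  classical
  obtain ⟨hrank, hne⟩ := h
  set E := e₁ - e₂ with hEdef
  have hE : E.IsHermitian := by
    rw [Matrix.IsHermitian, Matrix.conjTranspose]
    ext p q
    have h1 := h₁s.apply q p
    have h2 := h₂s.apply q p
    simp [hEdef, Matrix.sub_apply, h1, h2]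
  set μ := hE.eigenvalues with hμdef
  set U := (hE.eigenvectorUnitary : Matrix (Fin n) (Fin n) ℝ) with hUdef
  have hUU : star U * U = 1 := Matrix.mem_unitaryGroup_iff'.mp hE.eigenvectorUnitary.2
  -- trace is sum of eigenvalues, equal to zero
  have htr : ∑ i, μ i = 0 := by
    have hE0 : E.trace = 0 := by rw [hEdef, Matrix.trace_sub, h₁t, h₂t, sub_zero]
    rw [← hE0]
    conv_rhs => rw [hE.spectral_theorem, Unitary.conjStarAlgAut_apply]
    rw [Matrix.trace_mul_cycle, ← hUdef, hUU, one_mul, Matrix.trace_diagonal]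
    simp [hμdef]
  -- the set of nonzero eigenvalues
  set S : Finset (Fin n) := Finset.univ.filter (fun i => μ i ≠ 0) with hSdef
  have hcard : S.card ≤ 2 := by
    rw [← Fintype.card_subtype, ← hE.rank_eq_card_non_zero_eigs]
    exact hrank
  have hEne : E ≠ 0 := sub_ne_zero.mpr hne
  have hpos : 1 ≤ S.card := by
    rw [← Fintype.card_subtype, ← hE.rank_eq_card_non_zero_eigs]
    exact Nat.one_le_iff_ne_zero.mpr (myrank_ne_zero _ hEne)
  have hsumS : ∑ i ∈ S, μ i = 0 := by
    rw [hSdef, Finset.sum_filter_ne_zero, htr]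
  have hzero : ∀ k, k ∉ S → μ k = 0 := by
    intro k hk
    by_contra hk'
    exact hk (Finset.mem_filter.mpr ⟨Finset.mem_univ k, hk'⟩)
  -- S has exactly two elements
  have hS2 : S.card = 2 := by
    rcases Nat.lt_or_ge S.card 2 with h2 | h2
    · exfalso
      have h1 : S.card = 1 := le_antisymm (Nat.lt_succ_iff.mp h2) hpos
      obtain ⟨i, hi⟩ := Finset.card_eq_one.mp h1
      have hiS : i ∈ S := by rw [hi]; exact Finset.mem_singleton_self i
      have : μ i ≠ 0 := (Finset.mem_filter.mp hiS).2
      rw [hi, Finset.sum_singleton] at hsumS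
      exact this hsumS
    · exact le_antisymm hcard h2
  obtain ⟨i, j, hij, hSij⟩ := Finset.card_eq_two.mp hS2
  have hiS : i ∈ S := by rw [hSij]; simp
  have hjS : j ∈ S := by rw [hSij]; simp
  have hμi : μ i ≠ 0 := (Finset.mem_filter.mp hiS).2
  have hμj : μ j = - μ i := by
    rw [hSij, Finset.sum_pair hij] at hsumS
    linarith
  -- orthonormality of the two eigenvector columns
  have hortho : ∀ a b, ∑ p, U p a * U p b = if a = b then 1 else 0 := by
    intro a b
    have := congrFun (congrFun hUU a) b
    rw [Matrix.mul_apply] at this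
    simp only [Matrix.star_eq_conjTranspose, Matrix.conjTranspose_apply, star_trivial] at this
    rw [this]
    simp [Matrix.one_apply]
  have hvv : ∑ p, U p i * U p i = 1 := by rw [hortho]; simp
  have hww : ∑ p, U p j * U p j = 1 := by rw [hortho]; simp
  have hvw : ∑ p, U p i * U p j = 0 := by rw [hortho]; simp [hij]
  -- entrywise spectral decomposition
  have hEpq : ∀ p q, E p q = μ i * U p i * U q i + μ j * U p j * U q j := by
    intro p q
    have h0 := congrFun (congrFun hE.spectral_theorem p) q
    rw [Unitary.conjStarAlgAut_apply, Matrix.mul_apply] at h0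
    have h0' : E p q = ∑ k, U p k * μ k * U q k := by
      rw [h0]
      apply Finset.sum_congr rfl
      intro k _
      rw [Matrix.mul_diagonal]
      simp only [hUdef, Matrix.star_eq_conjTranspose, Matrix.conjTranspose_apply, star_trivial,
        Function.comp_apply, Matrix.IsHermitian.eigenvectorUnitary_apply, RCLike.ofReal_real_eq_id,
        id_eq, hμdef]
    rw [h0']
    have hsplit : ∑ k, U p k * μ k * U q k
        = ∑ k ∈ ({i, j} : Finset (Fin n)), U p k * μ k * U q k := by
      refine (Finset.sum_subset (Finset.subset_univ _) ?_).symm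
      intro k _ hk
      rw [hzero k (by rw [hSij]; exact hk)]
      ring
    rw [hsplit, Finset.sum_pair hij]
    ring
  -- construct a and n₀
  set s2 := Real.sqrt 2 with hs2def
  have hss : s2 * s2 = 2 := Real.mul_self_sqrt (by norm_num)
  have hs0 : s2 ≠ 0 := by
    intro h'
    rw [h'] at hss
    norm_num at hss
  set v : Fin n → ℝ := fun p => U p i with hvdef
  set w : Fin n → ℝ := fun p => U p j with hwdef
  refine ⟨fun p => s2 * μ i * (v p - w p), fun p => s2⁻¹ * (v p + w p), ?_, ?_, ?_⟩
  · -- a ≠ 0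
    intro h0
    have hvw' : ∀ p, v p = w p := by
      intro p
      have := congrFun h0 p
      simp only [Pi.zero_apply] at this
      have hc : s2 * μ i ≠ 0 := mul_ne_zero hs0 hμi
      have := mul_eq_zero.mp this
      rcases this with h' | h'
      · exact absurd h' hc
      · linarith
    have : (1 : ℝ) = 0 := by
      rw [← hvv, ← hvw]
      apply Finset.sum_congr rfl
      intro p _
      exact congrArg _ (hvw' p)
    norm_num at this
  · -- unit vector
    rw [dotProduct]
    have expand : ∀ p, (s2⁻¹ * (v p + w p)) * (s2⁻¹ * (v p + w p))
        = s2⁻¹ * s2⁻¹ * (v p * v p) + s2⁻¹ * s2⁻¹ * (v p * w p)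
          + (s2⁻¹ * s2⁻¹ * (v p * w p) + s2⁻¹ * s2⁻¹ * (w p * w p)) := by
      intro p; ring
    rw [Finset.sum_congr rfl (fun p _ => expand p)]
    rw [Finset.sum_add_distrib, Finset.sum_add_distrib, Finset.sum_add_distrib]
    simp only [← Finset.mul_sum]
    rw [hvv, hvw, hww]
    have hinv : s2⁻¹ * s2⁻¹ * 2 = 1 := by
      rw [← hss, ← mul_inv]
      field_simp
    linarith
  · -- the matrix identity
    ext p q
    have hrhs : ((1 / 2 : ℝ) • (vecMulVec (fun p => s2 * μ i * (v p - w p))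
          (fun p => s2⁻¹ * (v p + w p))
        + vecMulVec (fun p => s2⁻¹ * (v p + w p)) (fun p => s2 * μ i * (v p - w p)))) p q
        = (1/2) * ((s2 * μ i * (v p - w p)) * (s2⁻¹ * (v q + w q))
          + (s2⁻¹ * (v p + w p)) * (s2 * μ i * (v q - w q))) := by
      simp [Matrix.smul_apply, Matrix.add_apply, Matrix.vecMulVec_apply]
    rw [hrhs, hEpq p q, hμj]
    have hsinv : s2 * s2⁻¹ = 1 := mul_inv_cancel₀ hs0
    simp only [hvdef, hwdef]
    linear_combination (-(μ i * (U p i * U q i - U p j * U q j))) * hsinv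
end

/-- Rank-one vs symmetrized rank-one connectedness for symmetric trace-free matrices:
(i) `e₁ - e₂ = a ⊙ n₀` with `a ≠ 0`, `|n₀| = 1`; (ii) there are `M₁, M₂` with symmetric
parts `e₁, e₂` and `rank (M₁ - M₂) = 1`; (iii) `rank (e₁ - e₂) ≤ 2` and `e₁ ≠ e₂`. -/
theorem stmt3 {n : ℕ} (e₁ e₂ : Matrix (Fin n) (Fin n) ℝ)
    (h₁s : e₁.IsSymm) (h₂s : e₂.IsSymm)
    (h₁t : e₁.trace = 0) (h₂t : e₂.trace = 0) :
    List.TFAE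
      [(∃ (a n₀ : Fin n → ℝ), a ≠ 0 ∧ n₀ ⬝ᵥ n₀ = 1 ∧
          e₁ - e₂ = (1 / 2 : ℝ) • (vecMulVec a n₀ + vecMulVec n₀ a)),
       (∃ M₁ M₂ : Matrix (Fin n) (Fin n) ℝ,
          (1 / 2 : ℝ) • (M₁ + M₁ᵀ) = e₁ ∧ (1 / 2 : ℝ) • (M₂ + M₂ᵀ) = e₂ ∧
          (M₁ - M₂).rank = 1),
       ((e₁ - e₂).rank ≤ 2 ∧ e₁ ≠ e₂)] := by
  tfae_have 1 → 2 := imp12 e₁ e₂ h₁s h₂s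
  tfae_have 2 → 3 := imp23 e₁ e₂
  tfae_have 3 → 1 := imp31 e₁ e₂ h₁s h₂s h₁t h₂t
  tfae_finish
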